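/- arXiv:1312.6350 — 8 statements merged into one kernel-verified Lean document; each statement's English description precedes it below -/
import Mathlib

section
/- Let Q ∈ ℝ^{K×K} be symmetric positive semidefinite, λ > 0, and let x̄ ∈ ℝ^K with x̄_i > 0 for all i and ∑ x̄_i = 1 be such that the matrix (I − (1/K)ee^T)(Q − (λ/4) X̄^{−3/2})(I − (1/K)ee^T) is positive semidefinite, where X̄ = Diag(x̄). Define L_i as the i-th diagonal entry of (I − (1/K)ee^T) Q (I − (1/K)ee^T). Then (K−1) K^{3/2} ≤ (4/λ) ∑_{i=1}^K L_i = (4/λ)[tr(Q) − (1/K) e^T Q e]. -/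
open Matrix

lemma diag_nn_aux {n : ℕ} (M : Matrix (Fin n) (Fin n) ℝ) (h : M.PosSemidef) (i : Fin n) :
    0 ≤ M i i := by
  have := h.2 (Finsupp.single i 1)
  simpa using this

lemma rpow_sq_aux {y : ℝ} (hy : 0 < y) (a : ℝ) : (y ^ a) ^ 2 = y ^ (a * 2) := by
  rw [← Real.rpow_natCast (y ^ a) 2, ← Real.rpow_mul hy.le]
  norm_num

lemma rpow_mul_aux {y : ℝ} (hy : 0 < y) (a b : ℝ) : y ^ a * y ^ b = y ^ (a + b) := by
  rw [← Real.rpow_add hy]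

lemma jensen_aux (K : ℕ) (hK : 0 < K) (x : Fin K → ℝ) (hx : ∀ i, 0 < x i)
    (hsum : ∑ i, x i = 1) :
    (K : ℝ) ^ ((5 : ℝ) / 2) ≤ ∑ i, x i ^ (-(3 : ℝ) / 2) := by
  have hK0 : (0 : ℝ) < (K : ℝ) := by exact_mod_cast hK
  set A := ∑ i, x i ^ ((1 : ℝ) / 2) with hA
  set B := ∑ i, x i ^ (-(1 : ℝ) / 2) with hB
  set S := ∑ i, x i ^ (-(3 : ℝ) / 2) with hS
  have hne : (Finset.univ : Finset (Fin K)).Nonempty := ⟨⟨0, hK⟩, Finset.mem_univ _⟩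
  have hA0 : 0 < A := Finset.sum_pos (fun i _ => Real.rpow_pos_of_pos (hx i) _) hne
  have hB0 : 0 < B := Finset.sum_pos (fun i _ => Real.rpow_pos_of_pos (hx i) _) hne
  have hS0 : 0 < S := Finset.sum_pos (fun i _ => Real.rpow_pos_of_pos (hx i) _) hne
  -- CS1 : A^2 ≤ K
  have hCS1 : A ^ 2 ≤ (K : ℝ) := by
    have h := Finset.sum_mul_sq_le_sq_mul_sq Finset.univ (fun _ => (1 : ℝ))
      (fun i => x i ^ ((1 : ℝ) / 2))
    have h1 : ∀ i : Fin K, (x i ^ ((1 : ℝ) / 2)) ^ 2 = x i := by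
      intro i; rw [rpow_sq_aux (hx i)]; norm_num
    simp only [one_mul, one_pow, Finset.sum_const, Finset.card_univ, Fintype.card_fin,
      nsmul_eq_mul, mul_one, h1] at h
    calc A ^ 2 ≤ (K : ℝ) * ∑ i, x i := h
    _ = (K : ℝ) := by rw [hsum, mul_one]
  -- CS2 : K^2 ≤ A * B
  have hCS2 : (K : ℝ) ^ 2 ≤ A * B := by
    have h := Finset.sum_mul_sq_le_sq_mul_sq Finset.univ (fun i => x i ^ ((1 : ℝ) / 4))
      (fun i => x i ^ (-(1 : ℝ) / 4))
    have h1 : ∀ i : Fin K, x i ^ ((1 : ℝ) / 4) * x i ^ (-(1 : ℝ) / 4) = 1 := by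
      intro i; rw [rpow_mul_aux (hx i)]; norm_num
    have h2 : ∀ i : Fin K, (x i ^ ((1 : ℝ) / 4)) ^ 2 = x i ^ ((1 : ℝ) / 2) := by
      intro i; rw [rpow_sq_aux (hx i)]; norm_num
    have h3 : ∀ i : Fin K, (x i ^ (-(1 : ℝ) / 4)) ^ 2 = x i ^ (-(1 : ℝ) / 2) := by
      intro i; rw [rpow_sq_aux (hx i)]; norm_num
    simp only [h1, h2, h3, Finset.sum_const, Finset.card_univ, Fintype.card_fin,
      nsmul_eq_mul, mul_one] at h
    rw [hA, hB]
    convert h using 2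
  -- CS3 : B^2 ≤ A * S
  have hCS3 : B ^ 2 ≤ A * S := by
    have h := Finset.sum_mul_sq_le_sq_mul_sq Finset.univ (fun i => x i ^ ((1 : ℝ) / 4))
      (fun i => x i ^ (-(3 : ℝ) / 4))
    have h1 : ∀ i : Fin K, x i ^ ((1 : ℝ) / 4) * x i ^ (-(3 : ℝ) / 4) = x i ^ (-(1 : ℝ) / 2) := by
      intro i; rw [rpow_mul_aux (hx i)]; norm_num
    have h2 : ∀ i : Fin K, (x i ^ ((1 : ℝ) / 4)) ^ 2 = x i ^ ((1 : ℝ) / 2) := by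
      intro i; rw [rpow_sq_aux (hx i)]; norm_num
    have h3 : ∀ i : Fin K, (x i ^ (-(3 : ℝ) / 4)) ^ 2 = x i ^ (-(3 : ℝ) / 2) := by
      intro i; rw [rpow_sq_aux (hx i)]; norm_num
    simpa only [h1, h2, h3] using h
  -- A ≤ K^{1/2}
  have hAle : A ≤ (K : ℝ) ^ ((1 : ℝ) / 2) := by
    have hr : ((K : ℝ) ^ ((1 : ℝ) / 2)) ^ 2 = (K : ℝ) := by
      rw [rpow_sq_aux hK0]; norm_num
    have := hCS1.trans_eq hr.symm
    exact (pow_le_pow_iff_left₀ hA0.le (Real.rpow_nonneg hK0.le _) two_ne_zero).mp this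
  have hA3 : A ^ 3 ≤ (K : ℝ) ^ ((3 : ℝ) / 2) := by
    have : A ^ 3 ≤ ((K : ℝ) ^ ((1 : ℝ) / 2)) ^ 3 := pow_le_pow_left₀ hA0.le hAle 3
    calc A ^ 3 ≤ ((K : ℝ) ^ ((1 : ℝ) / 2)) ^ 3 := this
    _ = (K : ℝ) ^ ((3 : ℝ) / 2) := by
        rw [← Real.rpow_natCast ((K : ℝ) ^ ((1 : ℝ) / 2)) 3, ← Real.rpow_mul hK0.le]
        norm_num
  -- K^4 ≤ A^3 * S
  have hK4 : (K : ℝ) ^ 4 ≤ A ^ 3 * S := by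
    have h1 : ((K : ℝ) ^ 2) ^ 2 ≤ (A * B) ^ 2 :=
      pow_le_pow_left₀ (sq_nonneg _) hCS2 2
    have h2 : (A * B) ^ 2 = A ^ 2 * B ^ 2 := by ring
    have h3 : A ^ 2 * B ^ 2 ≤ A ^ 2 * (A * S) :=
      mul_le_mul_of_nonneg_left hCS3 (sq_nonneg A)
    calc (K : ℝ) ^ 4 = ((K : ℝ) ^ 2) ^ 2 := by ring
    _ ≤ (A * B) ^ 2 := h1
    _ = A ^ 2 * B ^ 2 := h2
    _ ≤ A ^ 2 * (A * S) := h3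
    _ = A ^ 3 * S := by ring
  have hK4' : (K : ℝ) ^ 4 ≤ (K : ℝ) ^ ((3 : ℝ) / 2) * S :=
    hK4.trans (mul_le_mul_of_nonneg_right hA3 hS0.le)
  have hkey : (K : ℝ) ^ ((5 : ℝ) / 2) * (K : ℝ) ^ ((3 : ℝ) / 2) = (K : ℝ) ^ 4 := by
    rw [rpow_mul_aux hK0, ← Real.rpow_natCast (K : ℝ) 4]
    norm_num
  have hKp : (0 : ℝ) < (K : ℝ) ^ ((3 : ℝ) / 2) := Real.rpow_pos_of_pos hK0 _
  have hfin : (K : ℝ) ^ ((5 : ℝ) / 2) * (K : ℝ) ^ ((3 : ℝ) / 2) ≤ S * (K : ℝ) ^ ((3 : ℝ) / 2) := by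
    rw [hkey]
    calc (K : ℝ) ^ 4 ≤ (K : ℝ) ^ ((3 : ℝ) / 2) * S := hK4'
    _ = S * (K : ℝ) ^ ((3 : ℝ) / 2) := mul_comm _ _
  exact le_of_mul_le_mul_right hfin hKp

theorem second_order_KKT_sparsity_bound (K : ℕ) (hK : 0 < K)
    (Q : Matrix (Fin K) (Fin K) ℝ) (hQsymm : Q.IsSymm) (hQpsd : Q.PosSemidef)
    (lam : ℝ) (hlam : 0 < lam)
    (x : Fin K → ℝ) (hx : ∀ i, 0 < x i) (hsum : ∑ i, x i = 1)
    (P : Matrix (Fin K) (Fin K) ℝ)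
    (hP : P = 1 - (K : ℝ)⁻¹ • Matrix.of (fun _ _ => 1))
    (hsoc : (P * (Q - (lam / 4) • Matrix.diagonal (fun i => (x i) ^ (-(3 : ℝ) / 2))) * P).PosSemidef)
    (L : Fin K → ℝ) (hL : ∀ i, L i = (P * Q * P) i i)
    (e : Fin K → ℝ) (he : e = fun _ => 1) :
    ((K : ℝ) - 1) * (K : ℝ) ^ ((3 : ℝ) / 2) ≤ (4 / lam) * ∑ i, L i ∧
      (4 / lam) * ∑ i, L i = (4 / lam) * (Q.trace - (K : ℝ)⁻¹ * (e ⬝ᵥ Q *ᵥ e)) := by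
  have hK0 : (0 : ℝ) < (K : ℝ) := by exact_mod_cast hK
  set r : ℝ := (K : ℝ)⁻¹ with hr
  set d : Fin K → ℝ := fun i => (x i) ^ (-(3 : ℝ) / 2) with hd
  set S : ℝ := ∑ i, d i with hSdef
  set T : ℝ := ∑ j, ∑ k, Q j k with hTdef
  have hPapp : ∀ i j, P i j = (if i = j then (1 : ℝ) else 0) - r := by
    intro i j
    simp [hP, Matrix.one_apply, Matrix.sub_apply]
  set D : Matrix (Fin K) (Fin K) ℝ := Matrix.diagonal d with hD
  -- diagonal entries of P*D*P
  have hPDP : ∀ i, (P * D * P) i i = (1 - 2 * r) * d i + r ^ 2 * S := by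
    intro i
    have : (P * D * P) i i = ∑ k, P i k * d k * P k i := by
      rw [Matrix.mul_apply]
      congr 1; ext k
      rw [Matrix.mul_diagonal]
    rw [this]
    have hterm : ∀ k, P i k * d k * P k i
        = (if k = i then (1 - 2 * r) * d k else 0) + r ^ 2 * d k := by
      intro k
      rw [hPapp, hPapp]
      rcases eq_or_ne k i with h | h
      · subst h; simp; ring
      · simp [h, Ne.symm h]; ring
    rw [Finset.sum_congr rfl (fun k _ => hterm k), Finset.sum_add_distrib,
      Finset.sum_ite_eq' Finset.univ i (fun k => (1 - 2 * r) * d k), ← Finset.mul_sum]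
    simp [hSdef]
  -- diagonal entries of P*Q*P
  have hPQ : ∀ i k, (P * Q) i k = Q i k - r * ∑ j, Q j k := by
    intro i k
    rw [Matrix.mul_apply]
    have : ∀ j, P i j * Q j k = (if j = i then Q j k else 0) - r * Q j k := by
      intro j
      rw [hPapp]
      rcases eq_or_ne j i with h | h
      · subst h; simp; ring
      · simp [h, Ne.symm h]
    rw [Finset.sum_congr rfl (fun j _ => this j), Finset.sum_sub_distrib,
      Finset.sum_ite_eq' Finset.univ i (fun j => Q j k), ← Finset.mul_sum]
    simp
  have hPQP : ∀ i, (P * Q * P) i i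
      = Q i i - r * (∑ j, Q j i) - r * (∑ k, Q i k) + r ^ 2 * T := by
    intro i
    rw [Matrix.mul_apply]
    have hterm : ∀ k, (P * Q) i k * P k i
        = (if k = i then Q i k - r * ∑ j, Q j k else 0)
          - r * Q i k + r ^ 2 * ∑ j, Q j k := by
      intro k
      rw [hPQ, hPapp]
      rcases eq_or_ne k i with h | h
      · subst h; simp; ring
      · simp [h, Ne.symm h]; ring
    rw [Finset.sum_congr rfl (fun k _ => hterm k)]
    rw [Finset.sum_add_distrib, Finset.sum_sub_distrib,
      Finset.sum_ite_eq' Finset.univ i (fun k => Q i k - r * ∑ j, Q j k),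
      ← Finset.mul_sum, ← Finset.mul_sum]
    simp only [Finset.mem_univ, if_true]
    have : ∑ k, ∑ j, Q j k = T := by
      rw [hTdef, Finset.sum_comm]
    rw [this]
  -- trace identity
  have htrace : ∑ i, L i = Q.trace - r * T := by
    have : ∑ i, L i = ∑ i, (Q i i - r * (∑ j, Q j i) - r * (∑ k, Q i k) + r ^ 2 * T) := by
      refine Finset.sum_congr rfl fun i _ => ?_
      rw [hL, hPQP]
    rw [this]
    rw [Finset.sum_add_distrib, Finset.sum_sub_distrib, Finset.sum_sub_distrib,
      ← Finset.mul_sum, ← Finset.mul_sum, Finset.sum_const, Finset.card_univ,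
      Fintype.card_fin, nsmul_eq_mul]
    have h1 : ∑ i, ∑ j, Q j i = T := by rw [hTdef, Finset.sum_comm]
    have h2 : ∑ i, ∑ k, Q i k = T := hTdef.symm
    have h3 : (K : ℝ) * (r ^ 2 * T) = r * T := by
      rw [hr]; field_simp
    rw [h1, h2, h3, Matrix.trace]
    simp [Matrix.diag]
  have hT : T = e ⬝ᵥ Q *ᵥ e := by
    simp [he, dotProduct, Matrix.mulVec, hTdef]
  -- second order condition on diagonal
  have hsplit : P * (Q - (lam / 4) • D) * P = P * Q * P - (lam / 4) • (P * D * P) := by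
    rw [Matrix.mul_sub, Matrix.sub_mul, Matrix.mul_smul, Matrix.smul_mul]
  have hdiagnn : ∀ i, 0 ≤ (P * Q * P) i i - (lam / 4) * (P * D * P) i i := by
    intro i
    have h := diag_nn_aux _ hsoc i
    rw [hsplit] at h
    simpa [Matrix.sub_apply, Matrix.smul_apply] using h
  have hsumL : (lam / 4) * ((1 - r) * S) ≤ ∑ i, L i := by
    have h : 0 ≤ ∑ i, ((P * Q * P) i i - (lam / 4) * (P * D * P) i i) :=
      Finset.sum_nonneg fun i _ => hdiagnn i
    rw [Finset.sum_sub_distrib, ← Finset.mul_sum] at h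
    have hsumD : ∑ i, (P * D * P) i i = (1 - r) * S := by
      rw [Finset.sum_congr rfl (fun i _ => hPDP i), Finset.sum_add_distrib,
        ← Finset.mul_sum, Finset.sum_const, Finset.card_univ, Fintype.card_fin,
        nsmul_eq_mul, ← hSdef]
      have : (K : ℝ) * (r ^ 2 * S) = r * S := by
        rw [hr]; field_simp
      rw [this]; ring
    rw [hsumD] at h
    have hLs : ∑ i, (P * Q * P) i i = ∑ i, L i :=
      Finset.sum_congr rfl fun i _ => (hL i).symm
    rw [hLs] at h
    linarith
  -- main inequality
  have hJ : (K : ℝ) ^ ((5 : ℝ) / 2) ≤ S := jensen_aux K hK x hx hsum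
  have h52 : (K : ℝ) ^ ((5 : ℝ) / 2) = (K : ℝ) * (K : ℝ) ^ ((3 : ℝ) / 2) := by
    rw [show (5 : ℝ) / 2 = 1 + 3 / 2 by norm_num, Real.rpow_add hK0, Real.rpow_one]
  constructor
  · have hr1 : (1 : ℝ) - r ≥ 0 := by
      rw [hr]
      have : (K : ℝ)⁻¹ ≤ 1 := by
        rw [inv_le_one_iff₀]
        right
        exact_mod_cast hK
      linarith
    have hstep : (1 - r) * (K : ℝ) ^ ((5 : ℝ) / 2) ≤ (1 - r) * S :=
      mul_le_mul_of_nonneg_left hJ hr1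
    have heq : (1 - r) * (K : ℝ) ^ ((5 : ℝ) / 2) = ((K : ℝ) - 1) * (K : ℝ) ^ ((3 : ℝ) / 2) := by
      rw [h52, hr]
      field_simp
    have h1 : ((K : ℝ) - 1) * (K : ℝ) ^ ((3 : ℝ) / 2) ≤ (1 - r) * S := heq ▸ hstep
    have h2 : (4 / lam) * ((lam / 4) * ((1 - r) * S)) ≤ (4 / lam) * ∑ i, L i := by
      apply mul_le_mul_of_nonneg_left hsumL
      positivity
    have h3 : (4 / lam) * ((lam / 4) * ((1 - r) * S)) = (1 - r) * S := by
      field_simp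
    linarith
  · rw [htrace, hT, hr]
end

section
/- Under the hypotheses of the second-order KKT sparsity theorem, for each index i in the support: the i-th diagonal entry of the projected Hessian satisfies L_i − (λ/4)[ x̄_i^{−3/2}(1 − 2/K) + (1/K²) ∑_{j=1}^K x̄_j^{−3/2} ] ≥ 0, and consequently (λ/4) x̄_i^{−3/2} (1 − 1/K)² ≤ L_i. -/
open Matrix

theorem second_order_KKT_diagonal_bound (K : ℕ) (hK : 0 < K)
    (Q : Matrix (Fin K) (Fin K) ℝ) (hQsymm : Q.IsSymm)
    (lam : ℝ) (hlam : 0 < lam)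
    (x : Fin K → ℝ) (hx : ∀ i, 0 < x i) (hsum : ∑ i, x i = 1)
    (P : Matrix (Fin K) (Fin K) ℝ)
    (hP : P = 1 - (K : ℝ)⁻¹ • Matrix.of (fun _ _ => 1))
    (hsoc : (P * (Q - (lam / 4) • Matrix.diagonal (fun i => (x i) ^ (-(3 : ℝ) / 2))) * P).PosSemidef)
    (L : Fin K → ℝ) (hL : ∀ i, L i = (P * Q * P) i i) (i : Fin K) :
    0 ≤ L i - (lam / 4) *
        ((x i) ^ (-(3 : ℝ) / 2) * (1 - 2 / K)
          + (1 / (K : ℝ) ^ 2) * ∑ j, (x j) ^ (-(3 : ℝ) / 2)) ∧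
      (lam / 4) * (x i) ^ (-(3 : ℝ) / 2) * (1 - 1 / K) ^ 2 ≤ L i := by
  set v : Fin K → ℝ := fun j => (x j) ^ (-(3 : ℝ) / 2) with hv
  have hvpos : ∀ j, 0 < v j := fun j => Real.rpow_pos_of_pos (hx j) _
  have hKR : (0 : ℝ) < K := by exact_mod_cast hK
  -- entries of P
  have hPe : ∀ a b, P a b = (if a = b then (1 : ℝ) else 0) - 1 / K := by
    intro a b
    simp [hP, Matrix.sub_apply, Matrix.one_apply, one_div]
  -- diagonal entry of P * diagonal v * P
  have hD : (P * Matrix.diagonal v * P) i i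
      = v i * (1 - 2 / K) + (1 / (K : ℝ) ^ 2) * ∑ j, v j := by
    have h1 : (P * Matrix.diagonal v * P) i i = ∑ b, P i b * v b * P b i := by
      rw [Matrix.mul_apply]
      exact Finset.sum_congr rfl fun b _ => by rw [Matrix.mul_diagonal]
    rw [h1]
    have h2 : ∀ b, P i b * v b * P b i
        = v b * (1 / (K : ℝ) ^ 2) + (if b = i then v i * (1 - 2 / K) else 0) := by
      intro b
      rw [hPe i b, hPe b i]
      by_cases hb : b = i
      · subst hb
        simp only [if_pos rfl, ↓reduceIte]
        have hK0 : (K : ℝ) ≠ 0 := hKR.ne'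
        field_simp
        ring
      · have hb' : ¬ i = b := fun h => hb h.symm
        simp only [if_neg hb, if_neg hb']
        ring
    rw [Finset.sum_congr rfl (fun b _ => h2 b), Finset.sum_add_distrib,
      Finset.sum_ite_eq' Finset.univ i (fun _ => v i * (1 - 2 / K)),
      if_pos (Finset.mem_univ i), ← Finset.sum_mul]
    ring
  -- diagonal entry of PSD matrix is nonneg
  have hdiag : 0 ≤ (P * (Q - (lam / 4) • Matrix.diagonal v) * P) i i := by
    have := hsoc.dotProduct_mulVec_nonneg (Pi.single i 1)
    simpa [dotProduct, Matrix.mulVec, Pi.single_apply, mul_ite,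
      Finset.sum_ite_eq, Finset.sum_ite_eq'] using this
  -- expand
  have hexp : (P * (Q - (lam / 4) • Matrix.diagonal v) * P) i i
      = (P * Q * P) i i - (lam / 4) * ((P * Matrix.diagonal v * P) i i) := by
    have : P * (Q - (lam / 4) • Matrix.diagonal v) * P
        = P * Q * P - (lam / 4) • (P * Matrix.diagonal v * P) := by
      rw [Matrix.mul_sub, Matrix.sub_mul, Matrix.mul_smul, Matrix.smul_mul]
    rw [this, Matrix.sub_apply, Matrix.smul_apply, smul_eq_mul]
  rw [hexp, hD, ← hL i] at hdiag
  have hsum_ge : v i ≤ ∑ j, v j :=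
    Finset.single_le_sum (fun j _ => (hvpos j).le) (Finset.mem_univ i)
  constructor
  · exact hdiag
  · show (lam / 4) * v i * (1 - 1 / K) ^ 2 ≤ L i
    have hK0 : (K : ℝ) ≠ 0 := hKR.ne'
    have e1 : (lam / 4) * v i * (1 - 1 / K) ^ 2
        = (lam / 4) * (v i * (1 - 2 / K) + (1 / (K : ℝ) ^ 2) * v i) := by
      field_simp
      ring
    have e2 : (1 / (K : ℝ) ^ 2) * v i ≤ (1 / (K : ℝ) ^ 2) * ∑ j, v j :=
      mul_le_mul_of_nonneg_left hsum_ge (by positivity)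
    have e3 : v i * (1 - 2 / K) + (1 / (K : ℝ) ^ 2) * v i
        ≤ v i * (1 - 2 / K) + (1 / (K : ℝ) ^ 2) * ∑ j, v j := by linarith
    have e4 := mul_le_mul_of_nonneg_left e3 (le_of_lt (by positivity : (0:ℝ) < lam / 4))
    linarith [hdiag, e1 ▸ e4]
end

section
/- Under the hypotheses of the second-order KKT sparsity theorem with K ≥ 2, if L_i > 0 for all i in the support, then every nonzero entry satisfies x̄_i ≥ (λ(K−1)² / (4 L_i K²))^{2/3}. -/
open Matrix

theorem second_order_KKT_entry_lower_bound (K : ℕ) (hK : 2 ≤ K)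
    (Q : Matrix (Fin K) (Fin K) ℝ) (hQsymm : Q.IsSymm)
    (lam : ℝ) (hlam : 0 < lam)
    (x : Fin K → ℝ) (hx : ∀ i, 0 < x i) (hsum : ∑ i, x i = 1)
    (P : Matrix (Fin K) (Fin K) ℝ)
    (hP : P = 1 - (K : ℝ)⁻¹ • Matrix.of (fun _ _ => 1))
    (hsoc : (P * (Q - (lam / 4) • Matrix.diagonal (fun i => (x i) ^ (-(3 : ℝ) / 2))) * P).PosSemidef)
    (L : Fin K → ℝ) (hL : ∀ i, L i = (P * Q * P) i i)
    (hLpos : ∀ i, 0 < L i) (i : Fin K) :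
    (lam * ((K : ℝ) - 1) ^ 2 / (4 * L i * (K : ℝ) ^ 2)) ^ ((2 : ℝ) / 3) ≤ x i := by
  have hKpos : (0:ℝ) < K := by positivity
  set d : Fin K → ℝ := fun j => (x j) ^ (-(3 : ℝ) / 2) with hd
  have hdpos : ∀ j, 0 < d j := fun j => Real.rpow_pos_of_pos (hx j) _
  -- P entries
  have hPij : ∀ a b, P a b = (if a = b then (1:ℝ) else 0) - (K : ℝ)⁻¹ := by
    intro a b
    simp [hP, Matrix.one_apply]
  have hPsymm : ∀ a b, P a b = P b a := by
    intro a b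
    simp [hPij, eq_comm]
  -- diagonal entry nonneg
  have hMii : 0 ≤ (P * (Q - (lam / 4) • Matrix.diagonal d) * P) i i := by
    have := hsoc.dotProduct_mulVec_nonneg (Pi.single i 1)
    simpa [dotProduct_single, Matrix.mulVec_single] using this
  -- expand
  have hexp : (P * (Q - (lam / 4) • Matrix.diagonal d) * P) i i
      = L i - (lam / 4) * ((P * Matrix.diagonal d * P) i i) := by
    rw [hL]
    simp [Matrix.mul_sub, Matrix.sub_mul, Matrix.smul_mul, Matrix.mul_smul, mul_comm]
  have hDii : (P * Matrix.diagonal d * P) i i = ∑ j, d j * (P i j)^2 := by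
    rw [Matrix.mul_apply]
    apply Finset.sum_congr rfl
    intro j _
    rw [Matrix.mul_diagonal, hPsymm j i]; ring
  have hsingle : d i * (P i i)^2 ≤ ∑ j, d j * (P i j)^2 := by
    apply Finset.single_le_sum (f := fun j => d j * (P i j)^2)
    · intro j _; exact mul_nonneg (hdpos j).le (sq_nonneg _)
    · exact Finset.mem_univ i
  have hPii : P i i = 1 - (K:ℝ)⁻¹ := by simp [hPij]
  have key : lam / 4 * (d i * (1 - (K:ℝ)⁻¹)^2) ≤ L i := by
    have h1 : lam / 4 * (d i * (P i i)^2) ≤ lam / 4 * ((P * Matrix.diagonal d * P) i i) := by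
      rw [hDii]
      exact mul_le_mul_of_nonneg_left hsingle (by positivity)
    rw [hPii] at h1
    nlinarith [hMii, hexp]
  -- rewrite d i
  set s : ℝ := (x i) ^ ((3:ℝ)/2) with hs
  have hspos : 0 < s := Real.rpow_pos_of_pos (hx i) _
  have hdi : d i = s⁻¹ := by
    show (x i) ^ (-(3:ℝ)/2) = ((x i) ^ ((3:ℝ)/2))⁻¹
    rw [← Real.rpow_neg (hx i).le]
    norm_num
  have hfrac : (1 - (K:ℝ)⁻¹) = ((K:ℝ) - 1) / K := by
    field_simp
  rw [hdi, hfrac] at key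
  have hK1 : (0:ℝ) < (K:ℝ) - 1 := by
    have : (2:ℝ) ≤ K := by exact_mod_cast hK
    linarith
  have hLi := hLpos i
  have hs0 : s ≠ 0 := ne_of_gt hspos
  have hK0 : (K:ℝ) ≠ 0 := ne_of_gt hKpos
  have hts : lam * ((K : ℝ) - 1) ^ 2 / (4 * L i * (K : ℝ) ^ 2) ≤ s := by
    rw [div_le_iff₀ (by positivity)]
    have h2 := mul_le_mul_of_nonneg_right key (by positivity : (0:ℝ) ≤ s * 4 * (K:ℝ)^2)
    have h3 : lam / 4 * (s⁻¹ * (((K:ℝ) - 1) / K) ^ 2) * (s * 4 * (K:ℝ)^2) = lam * ((K:ℝ) - 1)^2 := by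
      field_simp
    rw [h3] at h2
    linarith
  have htpos : 0 < lam * ((K : ℝ) - 1) ^ 2 / (4 * L i * (K : ℝ) ^ 2) := by
    positivity
  calc (lam * ((K : ℝ) - 1) ^ 2 / (4 * L i * (K : ℝ) ^ 2)) ^ ((2 : ℝ) / 3)
      ≤ s ^ ((2:ℝ)/3) := Real.rpow_le_rpow htpos.le hts (by norm_num)
    _ = x i := by
        rw [hs, ← Real.rpow_mul (hx i).le]
        norm_num
end

section
/- Let (x̄⁺, x̄⁻) be a first-order KKT point of the problem min (1/2)(x⁺ − x⁻)^T Q (x⁺ − x⁻) − c^T(x⁺ − x⁻) + λ∑(x⁺_j)^{1/2} + λ∑(x⁻_j)^{1/2} subject to e^T x⁺ − e^T x⁻ = 1, e^T x⁺ + e^T x⁻ ≤ δ, x⁺ ≥ 0, x⁻ ≥ 0, with λ > 0 and the multiplier λ₂ ≤ 0 for the inequality constraint. Then x̄⁺ and x̄⁻ have disjoint supports: x̄⁺_j · x̄⁻_j = 0 for all j. -/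
open Matrix

theorem l1_ball_lp_disjoint_supports (n : ℕ)
    (Q : Matrix (Fin n) (Fin n) ℝ) (c : Fin n → ℝ)
    (lam : ℝ) (hlam : 0 < lam)
    (lam1 lam2 : ℝ) (hlam2 : lam2 ≤ 0) (delta : ℝ)
    (xp xm : Fin n → ℝ) (hxp : ∀ i, 0 ≤ xp i) (hxm : ∀ i, 0 ≤ xm i)
    (hbudget : (∑ i, xp i) - (∑ i, xm i) = 1)
    (hl1 : (∑ i, xp i) + (∑ i, xm i) ≤ delta)
    (hKKTp : ∀ i, 0 < xp i →
      (Q *ᵥ (xp - xm)) i - c i + lam / (2 * Real.sqrt (xp i)) - lam1 - lam2 = 0)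
    (hKKTm : ∀ i, 0 < xm i →
      (Q *ᵥ (xm - xp)) i + c i + lam / (2 * Real.sqrt (xm i)) + lam1 - lam2 = 0) :
    ∀ j, xp j * xm j = 0 := by
  intro j
  by_contra h
  have hp : 0 < xp j := lt_of_le_of_ne (hxp j) fun e => h (by rw [← e]; ring)
  have hm : 0 < xm j := lt_of_le_of_ne (hxm j) fun e => h (by rw [← e]; ring)
  have h1 := hKKTp j hp
  have h2 := hKKTm j hm
  have hneg : (Q *ᵥ (xm - xp)) j = -((Q *ᵥ (xp - xm)) j) := by
    have : xm - xp = -(xp - xm) := by ring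
    rw [this, Matrix.mulVec_neg, Pi.neg_apply]
  rw [hneg] at h2
  have hs : lam / (2 * Real.sqrt (xp j)) + lam / (2 * Real.sqrt (xm j)) - 2 * lam2 = 0 := by
    linarith
  have t1 : 0 < lam / (2 * Real.sqrt (xp j)) :=
    div_pos hlam (by positivity)
  have t2 : 0 < lam / (2 * Real.sqrt (xm j)) :=
    div_pos hlam (by positivity)
  linarith
end

section
/- Let Q ∈ ℝ^{K×K} be symmetric, λ > 0, δ > 1, and suppose x̄⁺ ∈ ℝ^{K} satisfies x̄⁺ > 0, e^T x̄⁺ ≤ (δ+1)/2, and the second-order condition that (I − (1/K)ee^T)(Q − (λ/4) Diag(x̄⁺)^{−3/2})(I − (1/K)ee^T) is positive semidefinite. Then (K − 1) K^{3/2} ≤ ((δ+1)/2)^{3/2} · (4/λ) [tr(Q) − (1/K) e^T Q e]. -/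
open Matrix

theorem l1_ball_lp_sparsity_bound (K : ℕ) (hK : 0 < K)
    (Q : Matrix (Fin K) (Fin K) ℝ) (hQsymm : Q.IsSymm)
    (lam : ℝ) (hlam : 0 < lam) (delta : ℝ) (hdelta : 1 < delta)
    (x : Fin K → ℝ) (hx : ∀ i, 0 < x i) (hsum : ∑ i, x i ≤ (delta + 1) / 2)
    (P : Matrix (Fin K) (Fin K) ℝ)
    (hP : P = 1 - (K : ℝ)⁻¹ • Matrix.of (fun _ _ => 1))
    (hsoc : (P * (Q - (lam / 4) • Matrix.diagonal (fun i => (x i) ^ (-(3 : ℝ) / 2))) * P).PosSemidef)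
    (e : Fin K → ℝ) (he : e = fun _ => 1) :
    ((K : ℝ) - 1) * (K : ℝ) ^ ((3 : ℝ) / 2)
      ≤ ((delta + 1) / 2) ^ ((3 : ℝ) / 2) * ((4 / lam) * (Q.trace - (K : ℝ)⁻¹ * (e ⬝ᵥ Q *ᵥ e))) := by
  have hKpos : (0:ℝ) < (K:ℝ) := by exact_mod_cast hK
  have hKne : (K:ℝ) ≠ 0 := hKpos.ne'
  set D : Matrix (Fin K) (Fin K) ℝ := Matrix.diagonal (fun i => (x i) ^ (-(3 : ℝ) / 2)) with hD
  set M : Matrix (Fin K) (Fin K) ℝ := Q - (lam / 4) • D with hM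
  set T : ℝ := ∑ i, (x i) ^ (-(3 : ℝ) / 2) with hT
  set S : ℝ := ∑ i, x i with hS
  set sQ : ℝ := ∑ i, ∑ j, Q i j with hsQ
  -- P is idempotent
  have hPP : P * P = P := by
    have hJ : (Matrix.of (fun _ _ => (1:ℝ)) : Matrix (Fin K) (Fin K) ℝ) * Matrix.of (fun _ _ => 1)
        = (K : ℝ) • Matrix.of (fun _ _ => 1) := by
      ext i j; simp [Matrix.mul_apply]
    rw [hP, sub_mul, one_mul, mul_sub, mul_one, Matrix.smul_mul, Matrix.mul_smul, hJ]
    rw [smul_smul, smul_smul]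
    have h2 : (K:ℝ)⁻¹ * (K:ℝ)⁻¹ * K = (K:ℝ)⁻¹ := by field_simp
    rw [h2]; abel
  -- trace of PSD is nonneg
  have htr0 : 0 ≤ (P * M * P).trace := by
    rw [Matrix.trace]
    apply Finset.sum_nonneg
    intro i _
    have := hsoc.dotProduct_mulVec_nonneg (Pi.single i 1)
    simpa [dotProduct, Matrix.mulVec, Pi.single_apply, Finset.sum_ite_eq] using this
  -- compute the trace
  have htrace : (P * M * P).trace = M.trace - (K:ℝ)⁻¹ * ∑ i, ∑ j, M i j := by
    rw [Matrix.trace_mul_cycle, hPP, Matrix.trace_mul_comm]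
    rw [hP, mul_sub, mul_one, Matrix.trace_sub, Matrix.mul_smul, Matrix.trace_smul]
    congr 1
    simp [Matrix.trace, Matrix.mul_apply, Matrix.diag, smul_eq_mul]
  have htrM : M.trace = Q.trace - (lam / 4) * T := by
    rw [hM, Matrix.trace_sub, Matrix.trace_smul, hD, Matrix.trace_diagonal, smul_eq_mul, hT]
  have hDsum : ∑ i, ∑ j, D i j = T := by
    rw [hD, hT]
    apply Finset.sum_congr rfl
    intro i _
    simp [Matrix.diagonal_apply, Finset.sum_ite_eq]
  have hsM : ∑ i, ∑ j, M i j = sQ - (lam / 4) * T := by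
    have : ∑ i, ∑ j, M i j = (∑ i, ∑ j, Q i j) - (lam / 4) * ∑ i, ∑ j, D i j := by
      simp [hM, Matrix.sub_apply, Matrix.smul_apply, smul_eq_mul, Finset.sum_sub_distrib,
        Finset.mul_sum]
    rw [this, hDsum, hsQ]
  -- e^T Q e = sQ
  have heQe : e ⬝ᵥ Q *ᵥ e = sQ := by
    rw [he, hsQ]; simp [dotProduct, Matrix.mulVec]
  -- Step A conclusion
  have hstepA : (lam / 4) * (1 - (K:ℝ)⁻¹) * T ≤ Q.trace - (K:ℝ)⁻¹ * sQ := by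
    have := htr0
    rw [htrace, htrM, hsM] at this
    nlinarith [this]
  -- positivity facts
  haveI : Nonempty (Fin K) := Fin.pos_iff_nonempty.mp hK
  have hK1 : (1:ℝ) ≤ (K:ℝ) := by exact_mod_cast hK
  have hSpos : 0 < S := by
    rw [hS]; exact Finset.sum_pos (fun i _ => hx i) Finset.univ_nonempty
  have hTnonneg : 0 ≤ T := by
    rw [hT]; exact Finset.sum_nonneg fun i _ => Real.rpow_nonneg (hx i).le _
  have hSb : (0:ℝ) < (delta + 1) / 2 := by linarith
  set H : ℝ := ∑ i, (x i)⁻¹ with hHdef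
  -- AM-HM via Cauchy-Schwarz
  have hH : (K:ℝ)^2 ≤ S * H := by
    have cs := Finset.sum_mul_sq_le_sq_mul_sq Finset.univ
      (fun i => Real.sqrt (x i)) (fun i => (Real.sqrt (x i))⁻¹)
    have h1 : ∀ i : Fin K, Real.sqrt (x i) * (Real.sqrt (x i))⁻¹ = 1 :=
      fun i => mul_inv_cancel₀ (Real.sqrt_ne_zero'.mpr (hx i))
    have h2 : ∀ i : Fin K, (Real.sqrt (x i))^2 = x i := fun i => Real.sq_sqrt (hx i).le
    have h3 : ∀ i : Fin K, ((Real.sqrt (x i))⁻¹)^2 = (x i)⁻¹ := fun i => by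
      rw [inv_pow, h2 i]
    simp only [h1, h2, h3, Finset.sum_const, Finset.card_univ, Fintype.card_fin,
      nsmul_eq_mul, mul_one] at cs
    rw [hS, hHdef]; exact cs
  -- Jensen for t ↦ t^(3/2)
  have hJen : ((K:ℝ)⁻¹ * H) ^ ((3:ℝ)/2) ≤ (K:ℝ)⁻¹ * T := by
    have hw : ∑ _i : Fin K, (K:ℝ)⁻¹ = 1 := by
      simp [Finset.sum_const, Finset.card_univ, nsmul_eq_mul]
      field_simp
    have jen := Real.rpow_arith_mean_le_arith_mean_rpow Finset.univ
      (fun _ => (K:ℝ)⁻¹) (fun i => (x i)⁻¹)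
      (fun i _ => by positivity) hw (fun i _ => (inv_nonneg.mpr (hx i).le))
      (by norm_num : (1:ℝ) ≤ (3:ℝ)/2)
    have hxr : ∀ i : Fin K, ((x i)⁻¹) ^ ((3:ℝ)/2) = x i ^ (-(3:ℝ)/2) := fun i => by
      rw [Real.inv_rpow (hx i).le, ← Real.rpow_neg (hx i).le]
      norm_num
    simp only [hxr] at jen
    calc ((K:ℝ)⁻¹ * H) ^ ((3:ℝ)/2) = (∑ i, (K:ℝ)⁻¹ * (x i)⁻¹) ^ ((3:ℝ)/2) := by
          rw [hHdef, Finset.mul_sum]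
    _ ≤ ∑ i, (K:ℝ)⁻¹ * x i ^ (-(3:ℝ)/2) := jen
    _ = (K:ℝ)⁻¹ * T := by rw [hT, Finset.mul_sum]
  -- K/S ≤ K⁻¹ H
  have hKS : (K:ℝ)/S ≤ (K:ℝ)⁻¹ * H := by
    have h2' : (K:ℝ)⁻¹ * ((K:ℝ)^2) ≤ (K:ℝ)⁻¹ * (S*H) :=
      mul_le_mul_of_nonneg_left hH (by positivity)
    have h3' : (K:ℝ) ≤ (K:ℝ)⁻¹ * H * S := by
      calc (K:ℝ) = (K:ℝ)⁻¹ * (K:ℝ)^2 := by field_simp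
      _ ≤ (K:ℝ)⁻¹ * (S*H) := h2'
      _ = (K:ℝ)⁻¹ * H * S := by ring
    exact (div_le_iff₀ hSpos).mpr h3'
  -- T ≥ K * (K/S)^(3/2)
  have hTlow : (K:ℝ) * ((K:ℝ)/S) ^ ((3:ℝ)/2) ≤ T := by
    have := le_trans (Real.rpow_le_rpow (by positivity) hKS (by norm_num)) hJen
    calc (K:ℝ) * ((K:ℝ)/S) ^ ((3:ℝ)/2) ≤ (K:ℝ) * ((K:ℝ)⁻¹ * T) :=
          mul_le_mul_of_nonneg_left this (by positivity)
    _ = T := by field_simp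
  -- key inequality
  have hSK : S * ((K:ℝ)/S) = K := by field_simp
  have hKey : (K:ℝ) ^ ((5:ℝ)/2) ≤ S ^ ((3:ℝ)/2) * T := by
    have h2 : S^((3:ℝ)/2) * ((K:ℝ) * ((K:ℝ)/S)^((3:ℝ)/2)) = (K:ℝ)^((5:ℝ)/2) := by
      calc S^((3:ℝ)/2) * ((K:ℝ) * ((K:ℝ)/S)^((3:ℝ)/2))
          = (K:ℝ) * (S^((3:ℝ)/2) * ((K:ℝ)/S)^((3:ℝ)/2)) := by ring
      _ = (K:ℝ) * ((S * ((K:ℝ)/S)) ^ ((3:ℝ)/2)) := by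
            rw [Real.mul_rpow hSpos.le (by positivity)]
      _ = (K:ℝ) * (K:ℝ)^((3:ℝ)/2) := by rw [hSK]
      _ = (K:ℝ)^((1:ℝ)) * (K:ℝ)^((3:ℝ)/2) := by rw [Real.rpow_one]
      _ = (K:ℝ)^((5:ℝ)/2) := by rw [← Real.rpow_add hKpos]; norm_num
    calc (K:ℝ)^((5:ℝ)/2) = S^((3:ℝ)/2) * ((K:ℝ) * ((K:ℝ)/S)^((3:ℝ)/2)) := h2.symm
    _ ≤ S^((3:ℝ)/2) * T := mul_le_mul_of_nonneg_left hTlow (by positivity)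
  -- step A rescaled
  have hR : ((K:ℝ)-1)/K * T ≤ (4/lam) * (Q.trace - (K:ℝ)⁻¹ * sQ) := by
    have h4 : (4/lam) * ((lam/4) * (1-(K:ℝ)⁻¹) * T) = ((K:ℝ)-1)/K * T := by
      field_simp
    calc ((K:ℝ)-1)/K * T = (4/lam) * ((lam/4) * (1-(K:ℝ)⁻¹) * T) := h4.symm
    _ ≤ (4/lam) * (Q.trace - (K:ℝ)⁻¹ * sQ) :=
        mul_le_mul_of_nonneg_left hstepA (by positivity)
  -- assemble
  rw [heQe]
  have h52 : (K:ℝ)^((5:ℝ)/2) = (K:ℝ) * (K:ℝ)^((3:ℝ)/2) := by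
    rw [show (5:ℝ)/2 = 1 + 3/2 by norm_num, Real.rpow_add hKpos, Real.rpow_one]
  have hstart : ((K:ℝ) - 1) * (K:ℝ)^((3:ℝ)/2) = (((K:ℝ)-1)/K) * (K:ℝ)^((5:ℝ)/2) := by
    rw [h52]; field_simp
  have hKm1 : (0:ℝ) ≤ ((K:ℝ)-1)/K := by
    apply div_nonneg (by linarith) hKpos.le
  have hSSb : S ^ ((3:ℝ)/2) ≤ ((delta+1)/2) ^ ((3:ℝ)/2) :=
    Real.rpow_le_rpow hSpos.le hsum (by norm_num)
  calc ((K:ℝ) - 1) * (K:ℝ)^((3:ℝ)/2) = (((K:ℝ)-1)/K) * (K:ℝ)^((5:ℝ)/2) := hstart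
  _ ≤ (((K:ℝ)-1)/K) * (S^((3:ℝ)/2) * T) := mul_le_mul_of_nonneg_left hKey hKm1
  _ ≤ (((K:ℝ)-1)/K) * (((delta+1)/2)^((3:ℝ)/2) * T) := by
      apply mul_le_mul_of_nonneg_left _ hKm1
      exact mul_le_mul_of_nonneg_right hSSb hTnonneg
  _ = ((delta+1)/2)^((3:ℝ)/2) * ((((K:ℝ)-1)/K) * T) := by ring
  _ ≤ ((delta+1)/2)^((3:ℝ)/2) * ((4/lam) * (Q.trace - (K:ℝ)⁻¹ * sQ)) :=
      mul_le_mul_of_nonneg_left hR (by positivity)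
end

section
/- Let (x̄⁺, x̄⁻) be a first-order KKT point of min (1/2)(x⁺ − x⁻)^T Q (x⁺ − x⁻) − c^T(x⁺ − x⁻) + λ∑(x⁺_j)^{1/2} + λ∑(x⁻_j)^{1/2} + μ‖x⁺ − x⁻‖₂² subject to e^T x⁺ − e^T x⁻ = 1, x⁺ ≥ 0, x⁻ ≥ 0, with λ > 0 and μ ≥ 0. Then x̄⁺_j · x̄⁻_j = 0 for all j. -/
open Matrix

theorem l2_lp_disjoint_supports (n : ℕ)
    (Q : Matrix (Fin n) (Fin n) ℝ) (c : Fin n → ℝ)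
    (lam : ℝ) (hlam : 0 < lam) (mu : ℝ) (hmu : 0 ≤ mu) (lam1 : ℝ)
    (xp xm : Fin n → ℝ) (hxp : ∀ i, 0 ≤ xp i) (hxm : ∀ i, 0 ≤ xm i)
    (hbudget : (∑ i, xp i) - (∑ i, xm i) = 1)
    (hKKTp : ∀ i, 0 < xp i →
      (Q *ᵥ (xp - xm)) i - c i + lam / (2 * Real.sqrt (xp i))
        + 2 * mu * (xp i - xm i) - lam1 = 0)
    (hKKTm : ∀ i, 0 < xm i →
      (Q *ᵥ (xm - xp)) i + c i + lam / (2 * Real.sqrt (xm i))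
        - 2 * mu * (xp i - xm i) + lam1 = 0) :
    ∀ j, xp j * xm j = 0 := by
  intro j
  by_contra h
  have hp : 0 < xp j := lt_of_le_of_ne (hxp j) (by
    intro h0; exact h (by rw [← h0]; ring))
  have hm : 0 < xm j := lt_of_le_of_ne (hxm j) (by
    intro h0; exact h (by rw [← h0]; ring))
  have h1 := hKKTp j hp
  have h2 := hKKTm j hm
  have hneg : (Q *ᵥ (xm - xp)) j = -((Q *ᵥ (xp - xm)) j) := by
    have : xm - xp = -(xp - xm) := by ring
    rw [this, Matrix.mulVec_neg]; rfl
  rw [hneg] at h2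
  have hsp : 0 < lam / (2 * Real.sqrt (xp j)) :=
    div_pos hlam (by positivity)
  have hsm : 0 < lam / (2 * Real.sqrt (xm j)) :=
    div_pos hlam (by positivity)
  linarith
end

section
/- Let x ∈ ℝ^K with x_i > 0, ∑ x_j = 1, and K ≥ 2. Set d = e^i − e^0 where e^0 = (1/K)e, and x' = x − (K x_i/(K−1)) d. Then e^T x' = 1, x'_i = 0, x'_j ≥ 0 for all j, and for f(x) = (1/2)x^T Q x − φ m^T x: f(x') − f(x) = −(K/(K−1)) x_i f'(x; d) + (1/2)(K/(K−1))² x_i² L_i, where f'(x; d) = (Qx)^T d − φ(m_i − m̄) and L_i = d^T Q d. -/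
open Matrix

theorem marginal_cost_of_sparsity (K : ℕ) (hK : 2 ≤ K)
    (Q : Matrix (Fin K) (Fin K) ℝ) (hQsymm : Q.IsSymm)
    (phi : ℝ) (m : Fin K → ℝ) (i : Fin K)
    (x : Fin K → ℝ) (hx : ∀ j, 0 < x j) (hsum : ∑ j, x j = 1)
    (f : (Fin K → ℝ) → ℝ)
    (hf : ∀ z, f z = (1 / 2) * (z ⬝ᵥ Q *ᵥ z) - phi * (m ⬝ᵥ z))
    (d : Fin K → ℝ) (hd : d = Pi.single i 1 - fun _ => (K : ℝ)⁻¹)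
    (mbar : ℝ) (hmbar : mbar = (K : ℝ)⁻¹ * ∑ j, m j)
    (L : ℝ) (hL : L = d ⬝ᵥ Q *ᵥ d)
    (fd : ℝ) (hfd : fd = (Q *ᵥ x) ⬝ᵥ d - phi * (m i - mbar))
    (x' : Fin K → ℝ) (hx' : x' = x - ((K : ℝ) * x i / ((K : ℝ) - 1)) • d) :
    (∑ j, x' j = 1) ∧ x' i = 0 ∧ (∀ j, 0 ≤ x' j) ∧
      f x' - f x
        = -((K : ℝ) / ((K : ℝ) - 1)) * x i * fd
            + (1 / 2) * ((K : ℝ) / ((K : ℝ) - 1)) ^ 2 * (x i) ^ 2 * L := by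
  have hK0 : (0:ℝ) < (K:ℝ) := by
    have : 0 < K := by omega
    exact_mod_cast this
  have hK1 : (1:ℝ) < (K:ℝ) := by
    have : 1 < K := by omega
    exact_mod_cast this
  have hKne : (K:ℝ) ≠ 0 := ne_of_gt hK0
  have hK1ne : (K:ℝ) - 1 ≠ 0 := by linarith
  set c : ℝ := (K : ℝ) * x i / ((K : ℝ) - 1) with hc
  have hcpos : 0 < c := by
    apply div_pos (by have := hx i; positivity) (by linarith)
  -- sum of d is 0
  have hdsum : ∑ j, d j = 0 := by
    subst hd
    simp [Finset.sum_sub_distrib, Finset.sum_ite_eq', Pi.single_apply, mul_inv_cancel₀ hKne]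
  have hdi : d i = 1 - (K:ℝ)⁻¹ := by subst hd; simp
  have hdj : ∀ j, j ≠ i → d j = -(K:ℝ)⁻¹ := by
    intro j hj; subst hd; simp [Pi.single_apply, hj]
  have h1 : ∑ j, x' j = 1 := by
    subst hx'
    simp [Finset.sum_sub_distrib, ← Finset.mul_sum, hdsum, hsum]
  have h2 : x' i = 0 := by
    subst hx'
    simp only [Pi.sub_apply, Pi.smul_apply, smul_eq_mul, hdi, hc]
    field_simp
    ring
  have h3 : ∀ j, 0 ≤ x' j := by
    intro j
    by_cases hj : j = i
    · subst hj; rw [h2]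
    · subst hx'
      simp only [Pi.sub_apply, Pi.smul_apply, smul_eq_mul, hdj j hj]
      have h4 := hx j
      have h5 : (0:ℝ) < (K:ℝ)⁻¹ := by positivity
      have := mul_pos hcpos h5
      nlinarith
  refine ⟨h1, h2, h3, ?_⟩
  -- symmetry
  have hsymmdx : d ⬝ᵥ Q *ᵥ x = x ⬝ᵥ Q *ᵥ d := by
    rw [dotProduct_mulVec, ← mulVec_transpose, hQsymm.eq, dotProduct_comm]
  have hmd : m ⬝ᵥ d = m i - mbar := by
    subst hd hmbar
    simp [dotProduct, Pi.single_apply, mul_sub, mul_ite, Finset.sum_sub_distrib,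
      Finset.sum_ite_eq', ← Finset.sum_mul, Finset.mul_sum, mul_comm]
  have hxQd : x ⬝ᵥ Q *ᵥ d = (Q *ᵥ x) ⬝ᵥ d := by
    rw [← hsymmdx, dotProduct_comm]
  rw [hf, hf, hx']
  have expand : (x - c • d) ⬝ᵥ Q *ᵥ (x - c • d)
      = x ⬝ᵥ Q *ᵥ x - 2 * c * (x ⬝ᵥ Q *ᵥ d) + c^2 * (d ⬝ᵥ Q *ᵥ d) := by
    rw [mulVec_sub, mulVec_smul, sub_dotProduct, dotProduct_sub, dotProduct_sub,
      smul_dotProduct, dotProduct_smul, dotProduct_smul, smul_dotProduct, hsymmdx]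
    simp only [smul_eq_mul]
    ring
  have hmd2 : m ⬝ᵥ (x - c • d) = m ⬝ᵥ x - c * (m i - mbar) := by
    rw [dotProduct_sub, dotProduct_smul, hmd, smul_eq_mul]
  rw [expand, hmd2, hL, hfd, hxQd]
  rw [show c = (K:ℝ) / ((K:ℝ) - 1) * x i from by rw [hc]; ring]
  generalize (K:ℝ) / ((K:ℝ) - 1) = r
  ring
end

section
/- Suppose d̃ ∈ ℝ^n, μ ≥ 0, and a symmetric matrix Q̃ satisfy: (Q̃ + μI) d̃ = −c̃ + B^T y for some y (with B d̃ = 0), and N^T Q̃ N + μI ⪰ 0 where the columns of N form an orthonormal basis of ker(B) containing d̃ = N v. Then (1/2) d̃^T Q̃ d̃ + c̃^T d̃ ≤ −(μ/2)‖d̃‖². -/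
open Matrix

theorem trust_region_descent_inequality (n k p : ℕ)
    (Qt : Matrix (Fin n) (Fin n) ℝ) (hQt : Qt.IsSymm)
    (B : Matrix (Fin p) (Fin n) ℝ) (ct dt : Fin n → ℝ) (y : Fin p → ℝ)
    (mu : ℝ) (hmu : 0 ≤ mu)
    (hstat : (Qt + mu • 1) *ᵥ dt = -ct + Bᵀ *ᵥ y)
    (hker : B *ᵥ dt = 0)
    (N : Matrix (Fin n) (Fin k) ℝ) (hortho : Nᵀ * N = 1)
    (hNker : ∀ z : Fin k → ℝ, B *ᵥ (N *ᵥ z) = 0)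
    (v : Fin k → ℝ) (hv : dt = N *ᵥ v)
    (hpsd : (Nᵀ * Qt * N + mu • 1).PosSemidef) :
    (1 / 2) * (dt ⬝ᵥ Qt *ᵥ dt) + ct ⬝ᵥ dt ≤ -(mu / 2) * (dt ⬝ᵥ dt) := by
  -- c̃ᵀ d̃ = -d̃ᵀ Q̃ d̃ - μ ‖d̃‖²
  have hct : ct ⬝ᵥ dt = -(dt ⬝ᵥ Qt *ᵥ dt) - mu * (dt ⬝ᵥ dt) := by
    have h1 : dt ⬝ᵥ ((Qt + mu • 1) *ᵥ dt) = dt ⬝ᵥ (-ct + Bᵀ *ᵥ y) := by rw [hstat]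
    have h2 : dt ⬝ᵥ (Bᵀ *ᵥ y) = 0 := by
      rw [dotProduct_mulVec, ← mulVec_transpose, transpose_transpose, hker, zero_dotProduct]
    have h3 : dt ⬝ᵥ ((mu • (1 : Matrix (Fin n) (Fin n) ℝ)) *ᵥ dt) = mu * (dt ⬝ᵥ dt) := by
      rw [smul_mulVec, one_mulVec, dotProduct_smul, smul_eq_mul]
    have hcd : dt ⬝ᵥ (-ct) = -(ct ⬝ᵥ dt) := by
      rw [dotProduct_neg, dotProduct_comm]
    rw [add_mulVec, dotProduct_add, h3, dotProduct_add, h2, hcd, add_zero] at h1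
    linarith
  -- ‖d̃‖² = ‖v‖²
  have hnorm : dt ⬝ᵥ dt = v ⬝ᵥ v := by
    rw [hv, dotProduct_mulVec, ← mulVec_transpose, mulVec_mulVec, hortho, one_mulVec]
  -- d̃ᵀ Q̃ d̃ = vᵀ Nᵀ Q̃ N v ≥ -μ ‖v‖²
  have hq : dt ⬝ᵥ Qt *ᵥ dt = v ⬝ᵥ (Nᵀ * Qt * N) *ᵥ v := by
    rw [hv, ← mulVec_mulVec, ← mulVec_mulVec, dotProduct_mulVec v, vecMul_transpose]
  have hpos := hpsd.dotProduct_mulVec_nonneg v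
  simp only [star_trivial] at hpos
  rw [add_mulVec, dotProduct_add, smul_mulVec, one_mulVec, dotProduct_smul,
    smul_eq_mul] at hpos
  have : -mu * (v ⬝ᵥ v) ≤ v ⬝ᵥ (Nᵀ * Qt * N) *ᵥ v := by linarith
  nlinarith [this, hnorm, hq, hct]
end
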